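/- Unit propagation soundness for QBF with existential units: let Φ = Q₁x₁…Qₙxₙ.φ be a QBF in CNF containing a unit clause (ℓ) whose variable x is existentially quantified. Then Φ is true if and only if the QBF obtained by deleting x from the prefix and substituting into φ the value making ℓ true is true. -/
import Mathlib


inductive Quant | ex | all

/-- QBF semantics over named variables: the prefix is a list of
(variable, quantifier) pairs (outermost first); `τ` is the ambient assignment,
updated as the prefix is consumed; the matrix is a predicate on assignments. -/
def QTrueL {V : Type*} [DecidableEq V] :
    List (V × Quant) → ((V → Bool) → Prop) → (V → Bool) → Prop
  | [], φ, τ => φ τ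
  | (x, Quant.ex) :: qs, φ, τ =>
      QTrueL qs φ (Function.update τ x false) ∨ QTrueL qs φ (Function.update τ x true)
  | (x, Quant.all) :: qs, φ, τ =>
      QTrueL qs φ (Function.update τ x false) ∧ QTrueL qs φ (Function.update τ x true)

/-- An assignment satisfies a CNF (a finite set of clauses, each a finite set of
literals given as (variable, polarity) pairs) iff every clause has a true literal. -/
def CnfSat {V : Type*} (φ : Finset (Finset (V × Bool))) (τ : V → Bool) : Prop :=
  ∀ C ∈ φ, ∃ l ∈ C, τ l.1 = l.2

lemma qtrue_congr {V : Type*} [DecidableEq V] (qs : List (V × Quant))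
    {ψ ψ' : (V → Bool) → Prop} (h : ∀ σ, ψ σ ↔ ψ' σ) (τ : V → Bool) :
    QTrueL qs ψ τ ↔ QTrueL qs ψ' τ := by
  induction qs generalizing τ with
  | nil => exact h τ
  | cons yq qs ih =>
    obtain ⟨y, q⟩ := yq
    cases q <;> simp only [QTrueL] <;> rw [ih, ih]

lemma qtrue_update {V : Type*} [DecidableEq V] (qs : List (V × Quant))
    (x : V) (hx : x ∉ qs.map Prod.fst) (ψ : (V → Bool) → Prop) (b : Bool)
    (τ : V → Bool) :
    QTrueL qs ψ (Function.update τ x b) ↔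
      QTrueL qs (fun σ => ψ (Function.update σ x b)) τ := by
  induction qs generalizing τ with
  | nil => simp [QTrueL]
  | cons yq qs ih =>
    obtain ⟨y, q⟩ := yq
    simp only [List.map_cons, List.mem_cons, not_or] at hx
    have hyx : y ≠ x := fun h => hx.1 h.symm
    have hcomm : ∀ (c : Bool) (τ : V → Bool),
        Function.update (Function.update τ x b) y c =
        Function.update (Function.update τ y c) x b := fun c τ =>
      Function.update_comm (fun h => hyx h.symm) b c τ
    cases q <;> simp only [QTrueL] <;> rw [hcomm, hcomm, ih hx.2, ih hx.2]

lemma qtrue_false {V : Type*} [DecidableEq V] (qs : List (V × Quant))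
    (τ : V → Bool) : ¬ QTrueL qs (fun _ => False) τ := by
  induction qs generalizing τ with
  | nil => simp [QTrueL]
  | cons yq qs ih =>
    obtain ⟨y, q⟩ := yq
    cases q <;> simp only [QTrueL] <;> intro h
    · rcases h with h | h <;> exact ih _ h
    · exact ih _ h.1

lemma cnf_subst {V : Type*} [DecidableEq V] (φ : Finset (Finset (V × Bool)))
    (x : V) (p : Bool) (σ : V → Bool) :
    CnfSat φ (Function.update σ x p) ↔
      CnfSat ((φ.filter (fun C => (x, p) ∉ C)).image
        (fun C => C.filter (fun l => l.1 ≠ x))) σ := by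
  constructor
  · intro h C' hC'
    simp only [Finset.mem_image, Finset.mem_filter] at hC'
    obtain ⟨C, ⟨hCφ, hxp⟩, rfl⟩ := hC'
    obtain ⟨l, hl, hlv⟩ := h C hCφ
    refine ⟨l, Finset.mem_filter.2 ⟨hl, ?_⟩, ?_⟩
    · intro hlx
      rw [hlx, Function.update_self] at hlv
      have : l = (x, p) := Prod.ext hlx hlv.symm
      exact hxp (this ▸ hl)
    · have hlx : l.1 ≠ x := by
        intro hlx
        rw [hlx, Function.update_self] at hlv
        have : l = (x, p) := Prod.ext hlx hlv.symm
        exact hxp (this ▸ hl)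
      rwa [Function.update_of_ne hlx] at hlv
  · intro h C hC
    by_cases hxp : (x, p) ∈ C
    · exact ⟨(x, p), hxp, by simp⟩
    · obtain ⟨l, hl, hlv⟩ := h (C.filter (fun l => l.1 ≠ x))
        (Finset.mem_image.2 ⟨C, Finset.mem_filter.2 ⟨hC, hxp⟩, rfl⟩)
      rw [Finset.mem_filter] at hl
      exact ⟨l, hl.1, by rwa [Function.update_of_ne hl.2]⟩

/-- Unit propagation soundness for existential unit clauses: if a CNF QBF has a
unit clause with literal `(x, p)` where `x` is existentially quantified (and
`x` occurs nowhere else in the prefix), then the QBF is true iff the QBF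
obtained by deleting `x` from the prefix and substituting `x := p` into the
matrix (removing satisfied clauses and falsified literals) is true. -/
theorem stmt_18 {V : Type*} [DecidableEq V] (pre post : List (V × Quant))
    (x : V) (p : Bool) (φ : Finset (Finset (V × Bool)))
    (hunit : ({(x, p)} : Finset (V × Bool)) ∈ φ)
    (hx : x ∉ (pre ++ post).map Prod.fst)
    (τ : V → Bool) :
    QTrueL (pre ++ (x, Quant.ex) :: post) (CnfSat φ) τ ↔
    QTrueL (pre ++ post)
      (CnfSat ((φ.filter (fun C => (x, p) ∉ C)).image
        (fun C => C.filter (fun l => l.1 ≠ x)))) τ := by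
  induction pre generalizing τ with
  | nil =>
    simp only [List.nil_append, List.map_nil] at hx ⊢
    simp only [QTrueL]
    have hbad : ∀ σ : V → Bool, ¬ CnfSat φ (Function.update σ x (!p)) := by
      intro σ h
      obtain ⟨l, hl, hlv⟩ := h {(x, p)} hunit
      rw [Finset.mem_singleton] at hl
      subst hl
      rw [Function.update_self] at hlv
      simp at hlv
    have hgood : ∀ b : Bool,
        QTrueL post (CnfSat φ) (Function.update τ x b) ↔
          (if b = p then QTrueL post
            (CnfSat ((φ.filter (fun C => (x, p) ∉ C)).image
              (fun C => C.filter (fun l => l.1 ≠ x)))) τ else False) := by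
      intro b
      rw [qtrue_update post x hx (CnfSat φ) b τ]
      by_cases hb : b = p
      · subst hb
        simp only [if_pos rfl]
        exact qtrue_congr post (fun σ => cnf_subst φ x b σ) τ
      · have hb' : b = !p := by cases b <;> cases p <;> simp_all
        subst hb'
        simp only [if_neg hb]
        constructor
        · intro h
          exact absurd (qtrue_congr post
            (fun σ => iff_of_eq (eq_false (hbad σ))) τ |>.mp h) (qtrue_false post τ)
        · intro h; exact h.elim
    rw [hgood false, hgood true]
    cases p <;> simp
  | cons yq pre ih =>
    obtain ⟨y, q⟩ := yq
    simp only [List.cons_append, List.map_cons, List.mem_cons, not_or] at hx ⊢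
    cases q <;> simp only [QTrueL] <;>
      rw [ih hx.2 (Function.update τ y false), ih hx.2 (Function.update τ y true)]
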